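/- Let I be a stable monomial ideal in the skew polynomial ring R, and let J_q ⊆ K_q(I) be the free submodule spanned by the symbols e(i_1,…,i_q;u) with i_q ≥ max(u). Then D(J_q) ⊆ J_{q−1}, so (J_•(I), D) is a subcomplex of (K_•(I), D); moreover, for e(σ;u) ∈ J_q the q-th summand of D(e(σ;u)) vanishes, and the quotient complex K_•(I)/J_•(I) is the skew Eliahou–Kervaire complex (L_•(I), d). -/

import Mathlib

open Finsupp

/-- Exponent vectors of monomials in `n` variables. -/
abbrev NExp (n : ℕ) := Fin n →₀ ℕ

/-- Integer exponent vectors (for Laurent-type arguments of the bicharacter `C`). -/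
abbrev ZExp (n : ℕ) := Fin n →₀ ℤ

/-- Canonical inclusion of `ℕ`-exponent vectors into `ℤ`-exponent vectors. -/
noncomputable def zc {n : ℕ} (a : NExp n) : ZExp n := Finsupp.mapRange (fun (m : ℕ) => (m : ℤ)) (by simp) a

/-- Total degree of a monomial. -/
def wdeg {n : ℕ} (a : NExp n) : ℕ := a.sum fun _ e => e

/-- `maxIdx a` is the 1-based index of the largest variable occurring in `x^a`
(`0` if `a = 0`, i.e. for the monomial `1`). -/
def maxIdx {n : ℕ} (a : NExp n) : ℕ := a.support.sup fun i => (i : ℕ) + 1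

/-- `max(u) ≤ min(y)`: every variable occurring in `y` has (1-based) index at least
`maxIdx u`.  (This is vacuously true when `y = 0`, matching `min(1) = +∞`.) -/
def maxLeMin {n : ℕ} (u y : NExp n) : Prop := ∀ j ∈ y.support, maxIdx u ≤ (j : ℕ) + 1

/-- Data exhibiting the ring `R` as the skew polynomial ring `k_q[x_1,…,x_n]`:
the monomials `x^a` form a `k`-basis, multiply according to the alternating
bicharacter `C`, and `C` is induced by the defining constants `q i j` with
`x_i x_j = q i j • (x_j x_i)`. -/
structure SkewPoly (k R : Type*) [CommRing k] [Ring R] [Algebra k R] (n : ℕ) : Type _ where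
  /-- the monomial `x^a` -/
  mon : NExp n → R
  /-- the bicharacter `C`, defined by `x^a x^b = C(x^a,x^b) x^{a+b}` -/
  C : ZExp n → ZExp n → kˣ
  /-- the defining constants `q_{i,j}` -/
  q : Fin n → Fin n → kˣ
  q_diag : ∀ i, q i i = 1
  q_symm : ∀ i j, q j i = (q i j)⁻¹
  /-- the monomials form a `k`-basis of `R` -/
  basis : Module.Basis (NExp n) k R
  basis_eq : ∀ a, basis a = mon a
  mon_zero : mon 0 = 1
  mon_mul : ∀ a b, mon a * mon b = ((C (zc a) (zc b) : kˣ) : k) • mon (a + b)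
  C_add_left : ∀ a b c, C (a + b) c = C a c * C b c
  C_add_right : ∀ a b c, C a (b + c) = C a b * C a c
  C_single : ∀ i j : Fin n,
    C (Finsupp.single i 1) (Finsupp.single j 1) = if j < i then q i j else 1

namespace SkewPoly

variable {k R : Type*} [CommRing k] [Ring R] [Algebra k R] {n : ℕ}

/-- The bicharacter `χ(a,b) = C(a,b)/C(b,a)`, so that `x^a x^b = χ(x^a,x^b) x^b x^a`. -/
def chi (S : SkewPoly k R n) (a b : ZExp n) : kˣ := S.C a b * (S.C b a)⁻¹

/-- The set of exponent vectors of the monomials lying in the right ideal `I`. -/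
def monSet (S : SkewPoly k R n) (I : Submodule Rᵐᵒᵖ R) : Set (NExp n) :=
  {w | S.mon w ∈ I}

/-- `I` is a monomial (right) ideal: it is generated by a set of monomials. -/
def IsMonomialIdeal (S : SkewPoly k R n) (I : Submodule Rᵐᵒᵖ R) : Prop :=
  ∃ T : Set (NExp n), I = Submodule.span Rᵐᵒᵖ (S.mon '' T)

/-- `I` is stable: for every monomial `w ∈ I` and every index `i < max(w)`,
the monomial `(x_i * w)/x_{max(w)}` lies in `I`. -/
def IsStable (S : SkewPoly k R n) (I : Submodule Rᵐᵒᵖ R) : Prop :=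
  ∀ w ∈ S.monSet I, ∀ i m : Fin n, (m : ℕ) + 1 = maxIdx w → i < m →
    w + Finsupp.single i 1 - Finsupp.single m 1 ∈ S.monSet I

/-- The canonical (minimal) monomial generating set `G(I)`: monomials of `I` that are
not proper multiples of other monomials of `I`. -/
def G (S : SkewPoly k R n) (I : Submodule Rᵐᵒᵖ R) : Set (NExp n) :=
  {u | u ∈ S.monSet I ∧ ∀ v ∈ S.monSet I, v ≤ u → v = u}

/-- `g` is the decomposition function of the stable ideal `I`: it sends a monomial
`w ∈ I` to the generator `u ∈ G(I)` of its canonical decomposition `w = u * y`,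
`max(u) ≤ min(y)`. -/
def IsDecompFun (S : SkewPoly k R n) (I : Submodule Rᵐᵒᵖ R)
    (g : NExp n → NExp n) : Prop :=
  ∀ w ∈ S.monSet I, g w ∈ S.G I ∧ g w ≤ w ∧ maxLeMin (g w) (w - g w)

end SkewPoly

section Complex

open Finsupp

/-- Symbols `e(i_1,…,i_q; u)`: a list of variable indices together with a monomial. -/
abbrev EKSym (n : ℕ) := List (Fin n) × NExp n

/-- The exponent vector of `x_σ = x_{i_1} ⋯ x_{i_q}`. -/
noncomputable def listMon {n : ℕ} (σ : List (Fin n)) : NExp n :=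
  (σ.map fun i => Finsupp.single i 1).sum

variable {k R : Type*} [CommRing k] [Ring R] [Algebra k R] {n : ℕ}

/-- Right action of `R` on the free right `R`-module `EKSym n →₀ R`. -/
noncomputable def rmul (f : EKSym n →₀ R) (r : R) : EKSym n →₀ R :=
  f.mapRange (· * r) (zero_mul r)

/-- A symbol `e(i_1,…,i_q;u)` is admissible for `I` when `u ∈ G(I)` and
`1 ≤ i_1 < ⋯ < i_q < max(u)`. -/
def Adm (S : SkewPoly k R n) (I : Submodule Rᵐᵒᵖ R) (s : EKSym n) : Prop :=
  s.1.Pairwise (· < ·) ∧ s.2 ∈ S.G I ∧ ∀ i ∈ s.1, (i : ℕ) + 1 < maxIdx s.2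

/-- The value of the differential `D` of the big complex `K_•(I)` on the symbol
`e(σ;u)`:
`D e(σ;u) = Σ_r (−1)^r e(σ_r;u) C(x_{σ_r}*u, x_{i_r})⁻¹ x_{i_r}
          − Σ_r (−1)^r e(σ_r;u_r) C(x_{σ_r}, y_r)⁻¹ y_r`,
where `u_r = g(x_{i_r} * u)` and `y_r = (x_{i_r} * u)/u_r`. -/
noncomputable def Dsym (S : SkewPoly k R n) (g : NExp n → NExp n) (s : EKSym n) :
    EKSym n →₀ R :=
  ∑ r : Fin s.1.length,
    ((-1 : k) ^ ((r : ℕ) + 1)) •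
      (Finsupp.single (s.1.eraseIdx (r : ℕ), s.2)
          ((((S.C (zc (listMon (s.1.eraseIdx (r : ℕ)) + s.2))
              (Finsupp.single (s.1.get r) (1 : ℤ)))⁻¹ : kˣ) : k) •
            S.mon (Finsupp.single (s.1.get r) 1))
       - Finsupp.single (s.1.eraseIdx (r : ℕ), g (Finsupp.single (s.1.get r) 1 + s.2))
          ((((S.C (zc (listMon (s.1.eraseIdx (r : ℕ))))
              (zc (Finsupp.single (s.1.get r) 1 + s.2
                    - g (Finsupp.single (s.1.get r) 1 + s.2))))⁻¹ : kˣ) : k) •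
            S.mon (Finsupp.single (s.1.get r) 1 + s.2
                    - g (Finsupp.single (s.1.get r) 1 + s.2))))

/-- The differential `D : K_•(I) → K_•(I)` extended right-`R`-linearly. -/
noncomputable def Dfun (S : SkewPoly k R n) (g : NExp n → NExp n)
    (f : EKSym n →₀ R) : EKSym n →₀ R :=
  f.sum fun s r => rmul (Dsym S g s) r

open scoped Classical in
/-- The value of the Eliahou–Kervaire differential `d` of `L_•(I)` on `e(σ;u)`:
as for `D`, but the second sum is restricted to `A(σ;u)`, i.e. to those `r` for
which `e(σ_r;u_r)` is admissible. -/
noncomputable def dsym (S : SkewPoly k R n) (I : Submodule Rᵐᵒᵖ R)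
    (g : NExp n → NExp n) (s : EKSym n) : EKSym n →₀ R :=
  ∑ r : Fin s.1.length,
    ((-1 : k) ^ ((r : ℕ) + 1)) •
      (Finsupp.single (s.1.eraseIdx (r : ℕ), s.2)
          ((((S.C (zc (listMon (s.1.eraseIdx (r : ℕ)) + s.2))
              (Finsupp.single (s.1.get r) (1 : ℤ)))⁻¹ : kˣ) : k) •
            S.mon (Finsupp.single (s.1.get r) 1))
       - if Adm S I (s.1.eraseIdx (r : ℕ), g (Finsupp.single (s.1.get r) 1 + s.2)) then
          Finsupp.single (s.1.eraseIdx (r : ℕ), g (Finsupp.single (s.1.get r) 1 + s.2))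
          ((((S.C (zc (listMon (s.1.eraseIdx (r : ℕ))))
              (zc (Finsupp.single (s.1.get r) 1 + s.2
                    - g (Finsupp.single (s.1.get r) 1 + s.2))))⁻¹ : kˣ) : k) •
            S.mon (Finsupp.single (s.1.get r) 1 + s.2
                    - g (Finsupp.single (s.1.get r) 1 + s.2)))
         else 0)

/-- The Eliahou–Kervaire differential `d : L_•(I) → L_•(I)` extended
right-`R`-linearly. -/
noncomputable def dfun (S : SkewPoly k R n) (I : Submodule Rᵐᵒᵖ R)
    (g : NExp n → NExp n) (f : EKSym n →₀ R) : EKSym n →₀ R :=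
  f.sum fun s r => rmul (dsym S I g s) r

open scoped Classical in
/-- The augmentation `ε : L_0(I) → R`, `e(∅;u) ↦ u`. -/
noncomputable def epsfun (S : SkewPoly k R n) (f : EKSym n →₀ R) : R :=
  f.sum fun s r => if s.1 = [] then S.mon s.2 * r else 0

/-- Membership in the subcomplex `J`: the last index satisfies `i_q ≥ max(u)`. -/
def JSym {n : ℕ} (s : EKSym n) : Prop :=
  ∃ m : Fin n, s.1.getLast? = some m ∧ maxIdx s.2 ≤ (m : ℕ) + 1

/-- Two integer exponent vectors have the same `G`-degree. -/
def GdegEq (S : SkewPoly k R n) (a b : ZExp n) : Prop := ∀ c, S.chi a c = S.chi b c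

end Complex

section Statements

open Finsupp

variable {k R : Type*} [CommRing k] [Ring R] [Algebra k R] {n : ℕ}


-- ======================= auxiliary lemmas =======================

section Aux

open Finsupp

variable {k R : Type*} [CommRing k] [Ring R] [Algebra k R] {n : ℕ}

lemma zc_add (a b : NExp n) : zc (a + b) = zc a + zc b :=
  Finsupp.mapRange_add (fun x y => Nat.cast_add x y) a b

lemma zc_single (i : Fin n) (b : ℕ) :
    zc (Finsupp.single i b) = Finsupp.single i (b : ℤ) :=
  Finsupp.mapRange_single

lemma zc_zero : zc (0 : NExp n) = 0 := Finsupp.mapRange_zero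

lemma SkewPoly.C_zero_left (S : SkewPoly k R n) (c : ZExp n) : S.C 0 c = 1 := by
  have h := S.C_add_left 0 0 c
  rw [add_zero] at h
  exact left_eq_mul.mp h

lemma SkewPoly.C_nsmul_left (S : SkewPoly k R n) (m : ℕ) (a c : ZExp n) :
    S.C (m • a) c = S.C a c ^ m := by
  induction m with
  | zero => simpa using S.C_zero_left c
  | succ m ih => rw [succ_nsmul, S.C_add_left, ih, pow_succ]

lemma SkewPoly.C_zc_le (S : SkewPoly k R n) (u : NExp n) (i : Fin n)
    (h : ∀ j ∈ u.support, (j : ℕ) ≤ (i : ℕ)) :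
    S.C (zc u) (Finsupp.single i 1) = 1 := by
  induction u using Finsupp.induction with
  | zero => rw [zc_zero]; exact S.C_zero_left _
  | single_add a b f haf hb ih =>
    have hmem : ∀ j ∈ f.support, j ∈ (Finsupp.single a b + f).support := by
      intro j hj
      rw [Finsupp.mem_support_iff] at hj ⊢
      intro hc
      rw [Finsupp.add_apply] at hc
      omega
    have ha' : (a : ℕ) ≤ (i : ℕ) := by
      apply h a
      rw [Finsupp.mem_support_iff, Finsupp.add_apply,
        Finsupp.notMem_support_iff.mp haf, add_zero, Finsupp.single_eq_same]
      exact hb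
    have hsm : (Finsupp.single a (b : ℤ) : ZExp n) = b • Finsupp.single a (1 : ℤ) := by
      rw [Finsupp.smul_single]; norm_num
    have hni : ¬ i < a := by rw [Fin.lt_def]; omega
    rw [zc_add, S.C_add_left, ih (fun j hj => h j (hmem j hj)), mul_one, zc_single,
      hsm, S.C_nsmul_left, S.C_single, if_neg hni, one_pow]

lemma smul_unit_mem {I : Submodule Rᵐᵒᵖ R} (c : kˣ) {x : R}
    (h : ((c : k) • x) ∈ I) : x ∈ I := by
  have h2 := I.smul_mem (MulOpposite.op (algebraMap k R ((c⁻¹ : kˣ) : k))) h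
  rw [op_smul_eq_mul, smul_mul_assoc, ← Algebra.commutes, ← Algebra.smul_def,
    smul_smul, Units.mul_inv, one_smul] at h2
  exact h2

lemma SkewPoly.monSet_mul (S : SkewPoly k R n) (I : Submodule Rᵐᵒᵖ R)
    {w : NExp n} (hw : w ∈ S.monSet I) (a : NExp n) : w + a ∈ S.monSet I := by
  have h1 : S.mon w * S.mon a ∈ I := by
    have := I.smul_mem (MulOpposite.op (S.mon a)) hw
    rwa [op_smul_eq_mul] at this
  rw [S.mon_mul] at h1
  exact smul_unit_mem _ h1

lemma le_maxIdx {a : NExp n} {j : Fin n} (h : j ∈ a.support) :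
    (j : ℕ) + 1 ≤ maxIdx a := by
  unfold maxIdx; exact Finset.le_sup (f := fun i : Fin n => (i : ℕ) + 1) h

lemma maxIdx_mono {a b : NExp n} (h : a ≤ b) : maxIdx a ≤ maxIdx b := by
  unfold maxIdx; exact Finset.sup_mono (Finsupp.support_mono h)

lemma maxIdx_le {a : NExp n} {m : ℕ} (h : ∀ j ∈ a.support, (j : ℕ) + 1 ≤ m) :
    maxIdx a ≤ m := by
  unfold maxIdx; exact Finset.sup_le h

lemma g_add_single (S : SkewPoly k R n) (I : Submodule Rᵐᵒᵖ R)
    (g : NExp n → NExp n) (hg : S.IsDecompFun I g)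
    {u : NExp n} (hu : u ∈ S.G I) {i : Fin n} (hi : maxIdx u ≤ (i : ℕ) + 1) :
    g (Finsupp.single i 1 + u) = u := by
  have hw : (Finsupp.single i 1 + u) ∈ S.monSet I := by
    rw [add_comm]; exact S.monSet_mul I hu.1 _
  obtain ⟨hvG, hvle, hvmax⟩ := hg _ hw
  set v := g (Finsupp.single i 1 + u) with hv
  by_cases hvu : v ≤ u
  · exact hu.2 _ hvG.1 hvu
  · rw [Finsupp.le_def] at hvu; push_neg at hvu
    obtain ⟨j, hj⟩ := hvu
    have hvw := Finsupp.le_def.mp hvle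
    have hji : j = i := by
      by_contra hne
      have h1 := hvw j
      rw [Finsupp.add_apply, Finsupp.single_apply, if_neg (fun hh => hne hh.symm)] at h1
      omega
    subst hji
    have hjs : j ∈ v.support := by rw [Finsupp.mem_support_iff]; omega
    have hmv : (j : ℕ) + 1 ≤ maxIdx v := le_maxIdx hjs
    have hwv : (Finsupp.single j 1 + u) ≤ v := by
      rw [Finsupp.le_def]; intro t
      by_contra hc; push_neg at hc
      have hts : t ∈ ((Finsupp.single j 1 + u) - v).support := by
        rw [Finsupp.mem_support_iff, Finsupp.tsub_apply]; omega
      have hmt := hvmax t hts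
      have hjt : (j : ℕ) ≤ (t : ℕ) := by omega
      rcases eq_or_lt_of_le hjt with heq | hlt
      · have hteq : t = j := Fin.ext heq.symm
        subst hteq
        have hwj : (Finsupp.single t 1 + u : NExp n) t = u t + 1 := by
          rw [Finsupp.add_apply, Finsupp.single_eq_same]; omega
        omega
      · have hnt : u t = 0 := by
          by_contra hnz
          have := le_maxIdx (Finsupp.mem_support_iff.mpr hnz); omega
        have hst : (Finsupp.single j (1 : ℕ) : NExp n) t = 0 :=
          Finsupp.single_eq_of_ne (fun hh => absurd (congrArg Fin.val hh) (by omega))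
        have hwt : (Finsupp.single j 1 + u : NExp n) t = 0 := by
          rw [Finsupp.add_apply, hst, hnt]
        omega
    have hveq : v = Finsupp.single j 1 + u := le_antisymm hvle hwv
    have huw : u ≤ Finsupp.single j 1 + u := le_add_self
    exact (hvG.2 u hu.1 (by rw [hveq]; exact huw)).symm

lemma keyB (S : SkewPoly k R n) (I : Submodule Rᵐᵒᵖ R) (g : NExp n → NExp n)
    (hg : S.IsDecompFun I g) {u : NExp n} (hu : u ∈ S.G I) {i : Fin n}
    (hi : maxIdx u ≤ (i : ℕ) + 1) (τ : List (Fin n)) :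
    (Finsupp.single ((τ, u) : EKSym n)
        ((((S.C (zc (listMon τ + u)) (Finsupp.single i (1 : ℤ)))⁻¹ : kˣ) : k) •
          S.mon (Finsupp.single i 1))
      - Finsupp.single ((τ, g (Finsupp.single i 1 + u)) : EKSym n)
        ((((S.C (zc (listMon τ))
            (zc (Finsupp.single i 1 + u - g (Finsupp.single i 1 + u))))⁻¹ : kˣ) : k) •
          S.mon (Finsupp.single i 1 + u - g (Finsupp.single i 1 + u)))
      : EKSym n →₀ R) = 0 := by
  rw [g_add_single S I g hg hu hi, add_tsub_cancel_right]
  have hC : S.C (zc (listMon τ + u)) (Finsupp.single i (1 : ℤ))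
      = S.C (zc (listMon τ)) (zc (Finsupp.single i 1)) := by
    rw [zc_add, S.C_add_left,
      S.C_zc_le u i (fun j hj => by have := le_maxIdx hj; omega), mul_one,
      zc_single, Nat.cast_one]
  rw [hC, sub_self]

lemma get_le_getLast {σ : List (Fin n)} (hs : σ.Pairwise (· ≤ ·))
    (r : Fin σ.length) (hne : σ ≠ []) : σ.get r ≤ σ.getLast hne := by
  rw [List.getLast_eq_getElem]
  have hlen : σ.length - 1 < σ.length := by have := r.2; omega
  have hg : σ[σ.length - 1] = σ.get ⟨σ.length - 1, hlen⟩ := rfl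
  rw [hg]
  exact hs.rel_get_of_le (by rw [Fin.le_def]; simp; omega)

lemma mem_le_getLast {σ : List (Fin n)} (hs : σ.Pairwise (· ≤ ·))
    {i : Fin n} (hi : i ∈ σ) (hne : σ ≠ []) : i ≤ σ.getLast hne := by
  obtain ⟨r, hr⟩ := List.get_of_mem hi
  rw [← hr]; exact get_le_getLast hs r hne

lemma getLast?_eraseIdx {α : Type*} {σ : List α} (hne : σ ≠ []) {r : ℕ}
    (hr : r + 1 < σ.length) :
    (σ.eraseIdx r).getLast? = some (σ.getLast hne) := by
  have hlen : (σ.eraseIdx r).length = σ.length - 1 := by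
    rw [List.length_eraseIdx]
    simp only [if_pos (by omega : r < σ.length)]
  have hne2 : σ.eraseIdx r ≠ [] := by
    intro h; rw [h] at hlen; simp at hlen; omega
  rw [List.getLast?_eq_getLast hne2, List.getLast_eq_getElem,
    List.getLast_eq_getElem]
  congr 1
  rw [List.getElem_eraseIdx, dif_neg (by omega)]
  simp only [show (σ.eraseIdx r).length - 1 + 1 = σ.length - 1 by omega]

end Aux

open scoped Classical in
theorem stmt5 [IsNoetherianRing k]
    (S : SkewPoly k R n) (I : Submodule Rᵐᵒᵖ R)
    (hmono : S.IsMonomialIdeal I) (hstab : S.IsStable I)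
    (g : NExp n → NExp n) (hg : S.IsDecompFun I g) :
    -- (a)  D(J) ⊆ J
    (∀ s : EKSym n, s.1.Pairwise (· ≤ ·) → s.2 ∈ S.G I → JSym s →
      ∀ t ∈ (Dsym S g s).support, JSym t) ∧
    -- (b)  for e(σ;u) ∈ J, the q-th summand of D(e(σ;u)) vanishes
    (∀ (σ : List (Fin n)) (hσ : σ ≠ []) (u : NExp n), σ.Pairwise (· ≤ ·) → u ∈ S.G I →
      maxIdx u ≤ ((σ.getLast hσ : Fin n) : ℕ) + 1 →
      (Finsupp.single (σ.dropLast, u)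
          ((((S.C (zc (listMon σ.dropLast + u))
              (Finsupp.single (σ.getLast hσ) (1 : ℤ)))⁻¹ : kˣ) : k) •
            S.mon (Finsupp.single (σ.getLast hσ) 1))
        - Finsupp.single (σ.dropLast, g (Finsupp.single (σ.getLast hσ) 1 + u))
          ((((S.C (zc (listMon σ.dropLast))
              (zc (Finsupp.single (σ.getLast hσ) 1 + u
                - g (Finsupp.single (σ.getLast hσ) 1 + u))))⁻¹ : kˣ) : k) •
            S.mon (Finsupp.single (σ.getLast hσ) 1 + u
                - g (Finsupp.single (σ.getLast hσ) 1 + u)))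
        : EKSym n →₀ R) = 0) ∧
    -- (c)  the differential of the quotient complex K/J is d, i.e. L = K/J
    (∀ s : EKSym n, Adm S I s →
      dsym S I g s = (Dsym S g s).filter (fun t => ¬ JSym t)) := by
  classical
  have partB : ∀ (σ : List (Fin n)) (hσ : σ ≠ []) (u : NExp n), σ.Pairwise (· ≤ ·) → u ∈ S.G I →
      maxIdx u ≤ ((σ.getLast hσ : Fin n) : ℕ) + 1 →
      (Finsupp.single (σ.dropLast, u)
          ((((S.C (zc (listMon σ.dropLast + u))
              (Finsupp.single (σ.getLast hσ) (1 : ℤ)))⁻¹ : kˣ) : k) •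
            S.mon (Finsupp.single (σ.getLast hσ) 1))
        - Finsupp.single (σ.dropLast, g (Finsupp.single (σ.getLast hσ) 1 + u))
          ((((S.C (zc (listMon σ.dropLast))
              (zc (Finsupp.single (σ.getLast hσ) 1 + u
                - g (Finsupp.single (σ.getLast hσ) 1 + u))))⁻¹ : kˣ) : k) •
            S.mon (Finsupp.single (σ.getLast hσ) 1 + u
                - g (Finsupp.single (σ.getLast hσ) 1 + u)))
        : EKSym n →₀ R) = 0 := by
    intro σ hσ u hsort hu hmax
    exact keyB S I g hg hu hmax σ.dropLast
  refine ⟨?_, partB, ?_⟩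
  · -- part (a)
    rintro ⟨σ, u⟩ hsort hu hJ t ht
    have hsort : σ.Pairwise (· ≤ ·) := hsort
    have hu : u ∈ S.G I := hu
    obtain ⟨m, hm1, hm2⟩ := hJ
    have hm2 : maxIdx u ≤ (m : ℕ) + 1 := hm2
    have hσne : σ ≠ [] := by
      intro h; subst h; simp at hm1
    have hmlast : m = σ.getLast hσne := by
      rw [List.getLast?_eq_getLast hσne] at hm1
      exact (Option.some_inj.mp hm1).symm
    simp only [Dsym] at ht
    have ht2 := Finsupp.support_finset_sum ht
    rw [Finset.mem_biUnion] at ht2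
    obtain ⟨r, -, htr⟩ := ht2
    by_cases hr : (r : ℕ) + 1 = σ.length
    · -- last summand vanishes
      exfalso
      have hgetr : σ.get r = σ.getLast hσne := by
        rw [List.getLast_eq_getElem, List.get_eq_getElem]
        simp only [show (r : ℕ) = σ.length - 1 by omega]
      have h0 := keyB S I g hg hu (i := σ.get r)
        (by rw [hgetr, ← hmlast]; exact hm2) (σ.eraseIdx (r : ℕ))
      rw [h0, smul_zero] at htr
      simp at htr
    · have htAB : t = ((σ.eraseIdx (r : ℕ), u) : EKSym n)
          ∨ t = ((σ.eraseIdx (r : ℕ), g (Finsupp.single (σ.get r) 1 + u)) : EKSym n) := by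
        have h1 := Finsupp.support_smul htr
        have h2 := Finsupp.support_sub h1
        rw [Finset.mem_union] at h2
        rcases h2 with h | h
        · left; exact Finset.mem_singleton.mp (Finsupp.support_single_subset h)
        · right; exact Finset.mem_singleton.mp (Finsupp.support_single_subset h)
      have hglast : (σ.eraseIdx (r : ℕ)).getLast? = some m := by
        rw [hmlast]
        exact getLast?_eraseIdx hσne (by omega)
      rcases htAB with h | h <;> subst h
      · exact ⟨m, hglast, hm2⟩
      · refine ⟨m, hglast, ?_⟩
        show maxIdx (g (Finsupp.single (σ.get r) 1 + u)) ≤ (m : ℕ) + 1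
        have hw : (Finsupp.single (σ.get r) 1 + u) ∈ S.monSet I := by
          rw [add_comm]; exact S.monSet_mul I hu.1 _
        have hle := (hg _ hw).2.1
        have h3 : maxIdx (g (Finsupp.single (σ.get r) 1 + u))
            ≤ maxIdx (Finsupp.single (σ.get r) 1 + u) := maxIdx_mono hle
        have h4 : maxIdx (Finsupp.single (σ.get r) 1 + u) ≤ (m : ℕ) + 1 := by
          apply maxIdx_le
          intro j hj
          have hj2 := Finsupp.support_add hj
          rw [Finset.mem_union] at hj2
          rcases hj2 with h5 | h5
          · have h6 := Finset.mem_singleton.mp (Finsupp.support_single_subset h5)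
            subst h6
            have h7 := get_le_getLast hsort r hσne
            rw [← hmlast] at h7
            have := Fin.le_def.mp h7
            omega
          · have := le_maxIdx h5; omega
        omega
  · -- part (c)
    rintro ⟨σ, u⟩ ⟨hsort, hu, hadm⟩
    have hsort : σ.Pairwise (· < ·) := hsort
    have hu : u ∈ S.G I := hu
    have hadm : ∀ i ∈ σ, (i : ℕ) + 1 < maxIdx u := hadm
    have hmemlast : ∀ (τ : List (Fin n)) (m : Fin n), τ.getLast? = some m → m ∈ τ := by
      intro τ m hm
      obtain ⟨ys, hys⟩ := List.getLast?_eq_some_iff.mp hm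
      rw [hys]; simp
    have hF1 : ∀ r : Fin σ.length, ¬ JSym ((σ.eraseIdx (r : ℕ), u) : EKSym n) := by
      rintro r ⟨m, hm1, hm2⟩
      have hmm : m ∈ σ := (List.eraseIdx_sublist σ (r : ℕ)).subset (hmemlast _ _ hm1)
      have hm2 : maxIdx u ≤ (m : ℕ) + 1 := hm2
      have := hadm m hmm
      omega
    have hwmem : ∀ r : Fin σ.length,
        (Finsupp.single (σ.get r) 1 + u) ∈ S.monSet I := by
      intro r; rw [add_comm]; exact S.monSet_mul I hu.1 _
    have hF2 : ∀ r : Fin σ.length,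
        Adm S I ((σ.eraseIdx (r : ℕ), g (Finsupp.single (σ.get r) 1 + u)) : EKSym n)
          ↔ ¬ JSym ((σ.eraseIdx (r : ℕ), g (Finsupp.single (σ.get r) 1 + u)) : EKSym n) := by
      intro r
      constructor
      · rintro ⟨h1, h2, h3⟩ ⟨m, hm1, hm2⟩
        have hmm := hmemlast _ _ hm1
        have hm2 : maxIdx (g (Finsupp.single (σ.get r) 1 + u)) ≤ (m : ℕ) + 1 := hm2
        have := h3 m hmm
        omega
      · intro hnJ
        refine ⟨List.Pairwise.sublist (List.eraseIdx_sublist σ (r : ℕ)) hsort,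
          (hg _ (hwmem r)).1, ?_⟩
        intro i hi
        by_contra hc
        push_neg at hc
        have hc : maxIdx (g (Finsupp.single (σ.get r) 1 + u)) ≤ (i : ℕ) + 1 := hc
        have hne : σ.eraseIdx (r : ℕ) ≠ [] := by
          intro h; rw [h] at hi; simp at hi
        have hsort2 : (σ.eraseIdx (r : ℕ)).Pairwise (· ≤ ·) :=
          (List.Pairwise.sublist (List.eraseIdx_sublist σ (r : ℕ)) hsort).imp
            (fun h => le_of_lt h)
        have hlast := mem_le_getLast hsort2 hi hne
        refine hnJ ⟨(σ.eraseIdx (r : ℕ)).getLast hne,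
          List.getLast?_eq_getLast hne, ?_⟩
        show maxIdx (g (Finsupp.single (σ.get r) 1 + u))
          ≤ ((σ.eraseIdx (r : ℕ)).getLast hne : ℕ) + 1
        have := Fin.le_def.mp hlast
        omega
    ext a
    rw [Finsupp.filter_apply]
    simp only [dsym, Dsym, Finsupp.finset_sum_apply, Finsupp.smul_apply,
      Finsupp.sub_apply]
    by_cases hJ : JSym a
    · rw [if_neg (not_not_intro hJ)]
      apply Finset.sum_eq_zero
      intro r _
      have hne1 : ((σ.eraseIdx (r : ℕ), u) : EKSym n) ≠ a :=
        fun h => hF1 r (h ▸ hJ)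
      rw [Finsupp.single_eq_of_ne hne1.symm]
      by_cases hA : Adm S I ((σ.eraseIdx (r : ℕ), g (Finsupp.single (σ.get r) 1 + u)) : EKSym n)
      · rw [if_pos hA]
        have hne2 : ((σ.eraseIdx (r : ℕ), g (Finsupp.single (σ.get r) 1 + u)) : EKSym n) ≠ a :=
          fun h => (hF2 r).mp hA (h ▸ hJ)
        rw [Finsupp.single_eq_of_ne hne2.symm]
        simp
      · rw [if_neg hA]
        simp
    · rw [if_pos hJ]
      apply Finset.sum_congr rfl
      intro r _
      congr 1
      congr 1
      by_cases hA : Adm S I ((σ.eraseIdx (r : ℕ), g (Finsupp.single (σ.get r) 1 + u)) : EKSym n)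
      · rw [if_pos hA]
      · rw [if_neg hA, Finsupp.zero_apply]
        have hJ2 : JSym ((σ.eraseIdx (r : ℕ), g (Finsupp.single (σ.get r) 1 + u)) : EKSym n) := by
          by_contra hn
          exact hA ((hF2 r).mpr hn)
        rw [Finsupp.single_eq_of_ne (fun h => hJ (by rw [h]; exact hJ2))]

end Statements
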